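/- Let r ≥ 2, n ≥ 2r, and let H be an M_1^{(r)}-saturated r-cgh on Ω_n. Then: (1) every vertex of Ω_n has positive degree in H, so that λ(v_i) and ρ(v_i) are well defined for every vertex v_i; (2) for all v_i, λ(v_i) ∉ [v_{i-r+2}, v_{i+r-1}] and ρ(v_i) ∉ [v_{i-r+1}, v_{i+r-2}]; (3) for all v_i, the cyclic order λ(v_i) < v_i < ρ(v_i) ≤ λ(v_i) holds; and (4) if v_j ∈ [ρ(v_i), λ(v_i)], then every r-element subset of Ω_n containing both v_i and v_j is an edge of H. -/

import Mathlib

open Finset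

/-- An abstract convex geometric hypergraph: `m` vertices on a circle, with the
cyclic ordering `0 < 1 < ⋯ < m-1 < 0`, together with a family of edges. -/
structure CGH where
  m : ℕ
  edges : Finset (Finset (Fin m))

/-- A list of points of `Fin n` is in (strict) cyclic order if some rotation of it
is strictly increasing in the linear order of `Fin n`. -/
def CyclicSorted {n : ℕ} (l : List (Fin n)) : Prop :=
  ∃ k : ℕ, (l.rotate k).Chain' (· < ·)

/-- `H` contains a subhypergraph isomorphic to the convex geometric hypergraph `F`:
there is an injection of the vertices of `F` into `Fin n` respecting the cyclic
orderings and sending every edge of `F` to an edge of `H`. -/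
def HasCopy (F : CGH) {n : ℕ} (H : Finset (Finset (Fin n))) : Prop :=
  ∃ f : Fin F.m → Fin n, Function.Injective f ∧ CyclicSorted (List.ofFn f) ∧
    ∀ e ∈ F.edges, e.image f ∈ H

/-- `H` is an `F`-saturated `r`-uniform convex geometric hypergraph on `Fin n`. -/
def IsSat (F : CGH) (r : ℕ) {n : ℕ} (H : Finset (Finset (Fin n))) : Prop :=
  (∀ h ∈ H, h.card = r) ∧ ¬ HasCopy F H ∧
    ∀ e : Finset (Fin n), e.card = r → e ∉ H → HasCopy F (insert e H)

/-- The saturation number `sat_○(n, F)` for `r`-uniform cgh's on `Fin n`. -/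
noncomputable def satNum (F : CGH) (r n : ℕ) : ℕ :=
  sInf {k | ∃ H : Finset (Finset (Fin n)), IsSat F r H ∧ H.card = k}

/-- `M_1^{(r)}`: two geometrically disjoint `r`-tuples. -/
def M1r (r : ℕ) : CGH where
  m := 2 * r
  edges := {Finset.univ.filter (fun i : Fin (2 * r) => (i : ℕ) < r),
            Finset.univ.filter (fun i : Fin (2 * r) => r ≤ (i : ℕ))}

def M1cgh : CGH := ⟨6, {({0, 1, 2} : Finset (Fin 6)), ({3, 4, 5} : Finset (Fin 6))}⟩
def M2cgh : CGH := ⟨6, {({0, 1, 3} : Finset (Fin 6)), ({2, 4, 5} : Finset (Fin 6))}⟩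
def M3cgh : CGH := ⟨6, {({0, 2, 4} : Finset (Fin 6)), ({1, 3, 5} : Finset (Fin 6))}⟩
def S1cgh : CGH := ⟨5, {({0, 1, 4} : Finset (Fin 5)), ({0, 2, 3} : Finset (Fin 5))}⟩
def S2cgh : CGH := ⟨5, {({0, 1, 2} : Finset (Fin 5)), ({0, 3, 4} : Finset (Fin 5))}⟩
def S3cgh : CGH := ⟨5, {({0, 1, 3} : Finset (Fin 5)), ({0, 2, 4} : Finset (Fin 5))}⟩
def D1cgh : CGH := ⟨4, {({0, 1, 2} : Finset (Fin 4)), ({0, 2, 3} : Finset (Fin 4))}⟩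
def D2cgh : CGH := ⟨4, {({0, 1, 2} : Finset (Fin 4)), ({0, 1, 3} : Finset (Fin 4))}⟩

/-- The closed clockwise arc `[a, b]` in `Fin n`. -/
def arcCC {n : ℕ} (a b : Fin n) : Finset (Fin n) :=
  if a ≤ b then Finset.univ.filter (fun x => a ≤ x ∧ x ≤ b)
  else Finset.univ.filter (fun x => a ≤ x ∨ x ≤ b)

/-- The open clockwise arc `(a, b)` in `Fin n`. -/
def arcOO {n : ℕ} (a b : Fin n) : Finset (Fin n) :=
  if a < b then Finset.univ.filter (fun x => a < x ∧ x < b)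
  else Finset.univ.filter (fun x => a < x ∨ x < b)

/-- The tuple `(w_1, …, w_{2ℓ+1})` (`0`-indexed here) consists of distinct points with
`w_1 < w_3 < ⋯ < w_{2ℓ+1} < w_2 < w_4 < ⋯ < w_{2ℓ} < w_1` in the cyclic order. -/
def SemiValid {n : ℕ} (ℓ : ℕ) (w : Fin (2 * ℓ + 1) → Fin n) : Prop :=
  Function.Injective w ∧
    CyclicSorted (List.ofFn fun p : Fin (2 * ℓ + 1) =>
      w ⟨(2 * (p : ℕ)) % (2 * ℓ + 1), Nat.mod_lt _ (by omega)⟩)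

/-- A semi-valid tuple is `r`-valid if moreover `|[w_i, w_{i-1}]| ≥ r` for all `i`. -/
def RValid {n : ℕ} (r ℓ : ℕ) (w : Fin (2 * ℓ + 1) → Fin n) : Prop :=
  SemiValid ℓ w ∧ ∀ i : Fin (2 * ℓ + 1), r ≤ (arcCC (w i) (w (i - 1))).card

/-- `H_n^{(r)}(C)`: all `r`-sets meeting every interval `[w_i, w_{i-1}]`. -/
def HnC {n : ℕ} (r ℓ : ℕ) (w : Fin (2 * ℓ + 1) → Fin n) : Finset (Finset (Fin n)) :=
  (Finset.powersetCard r Finset.univ).filter fun e =>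
    ∀ i : Fin (2 * ℓ + 1), (e ∩ arcCC (w i) (w (i - 1))).Nonempty

/-- `j` is the vertex `λ(v)` for `v` in `H`. -/
def IsLam {n : ℕ} [NeZero n] (H : Finset (Finset (Fin n))) (v j : Fin n) : Prop :=
  (∃ h ∈ H, v ∈ h ∧ h ⊆ arcCC j v) ∧ ¬ ∃ h ∈ H, v ∈ h ∧ h ⊆ arcCC (j + 1) v

/-- `j` is the vertex `ρ(v)` for `v` in `H`. -/
def IsRho {n : ℕ} [NeZero n] (H : Finset (Finset (Fin n))) (v j : Fin n) : Prop :=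
  (∃ h ∈ H, v ∈ h ∧ h ⊆ arcCC v j) ∧ ¬ ∃ h ∈ H, v ∈ h ∧ h ⊆ arcCC v (j - 1)

noncomputable def lamF {n : ℕ} [NeZero n] (H : Finset (Finset (Fin n))) (v : Fin n) : Fin n :=
  letI := Classical.propDecidable (∃ j, IsLam H v j)
  if h : ∃ j, IsLam H v j then h.choose else v

noncomputable def rhoF {n : ℕ} [NeZero n] (H : Finset (Finset (Fin n))) (v : Fin n) : Fin n :=
  letI := Classical.propDecidable (∃ j, IsRho H v j)
  if h : ∃ j, IsRho H v j then h.choose else v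

/-- Strict cyclic betweenness on `Fin n`. -/
def CyclicSbtw {n : ℕ} (a b c : Fin n) : Prop :=
  (a < b ∧ b < c) ∨ (b < c ∧ c < a) ∨ (c < a ∧ a < b)

/-- Isomorphism of two cgh's on `Fin n`: a bijection of the vertex set respecting the
cyclic order and inducing a bijection of the edge sets. -/
def CGHIso {n : ℕ} (H H' : Finset (Finset (Fin n))) : Prop :=
  ∃ g : Fin n ≃ Fin n,
    (∀ a b c : Fin n, CyclicSbtw a b c → CyclicSbtw (g a) (g b) (g c)) ∧
    ∀ e : Finset (Fin n), e ∈ H ↔ e.image g ∈ H'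

/-- The 3-cgh `H_n^{(3)}`: all triples containing `v_0`, together with all triples
containing one of the pairs `{v_1, v_{n-2}}`, `{v_1, v_{n-1}}`, `{v_2, v_{n-1}}`. -/
def Hn3 (n : ℕ) (hn : 6 ≤ n) : Finset (Finset (Fin n)) :=
  (Finset.powersetCard 3 Finset.univ).filter fun e =>
    (⟨0, by omega⟩ : Fin n) ∈ e ∨
    ((⟨1, by omega⟩ : Fin n) ∈ e ∧ (⟨n - 2, by omega⟩ : Fin n) ∈ e) ∨
    ((⟨1, by omega⟩ : Fin n) ∈ e ∧ (⟨n - 1, by omega⟩ : Fin n) ∈ e) ∨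
    ((⟨2, by omega⟩ : Fin n) ∈ e ∧ (⟨n - 1, by omega⟩ : Fin n) ∈ e)

/-- Saturation with respect to a family of cgh's. -/
def FamSat (ℱ : Set CGH) (r : ℕ) {n : ℕ} (H : Finset (Finset (Fin n))) : Prop :=
  (∀ h ∈ H, h.card = r) ∧ (∀ F ∈ ℱ, ¬ HasCopy F H) ∧
    ∀ e : Finset (Fin n), e.card = r → e ∉ H → ∃ F ∈ ℱ, HasCopy F (insert e H)

noncomputable def famSatNum (ℱ : Set CGH) (r n : ℕ) : ℕ :=
  sInf {k | ∃ H : Finset (Finset (Fin n)), FamSat ℱ r H ∧ H.card = k}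

/-- Rotation of a point of `Fin n` by an integer amount `m`. -/
def finShift {n : ℕ} (hn : 0 < n) (v : Fin n) (m : ℤ) : Fin n :=
  ⟨(((v : ℤ) + m) % (n : ℤ)).toNat, by
    have h0 : (0 : ℤ) < (n : ℤ) := by exact_mod_cast hn
    have h1 := Int.emod_nonneg ((v : ℤ) + m) (by omega : (n : ℤ) ≠ 0)
    have h2 := Int.emod_lt_of_pos ((v : ℤ) + m) h0
    omega⟩

/-- The tuple `w` is `(i,k)`-consecutive: starting from position `i`, the entries at
positions `i, i+2, …, i+2(k-1)` are `k` consecutive points `v_j, v_{j+1}, …, v_{j+k-1}`. -/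
def ConsecAt {n ℓ : ℕ} (hn : 0 < n) (w : Fin (2 * ℓ + 1) → Fin n)
    (i : Fin (2 * ℓ + 1)) (k : ℕ) : Prop :=
  ∃ j : Fin n, ∀ s : ℕ, s < k →
    w (i + ⟨(2 * s) % (2 * ℓ + 1), Nat.mod_lt _ (by omega)⟩) = finShift hn j s

/-- The tuple `C_{i,k,m}`: the `k` consecutive points at positions `i, i+2, …, i+2(k-1)`
are rotated by `m` units; all other entries are unchanged. -/
def shiftTuple {n ℓ : ℕ} (hn : 0 < n) (w : Fin (2 * ℓ + 1) → Fin n)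
    (i : Fin (2 * ℓ + 1)) (k : ℕ) (m : ℤ) : Fin (2 * ℓ + 1) → Fin n :=
  fun p => if (p - i).val % 2 = 0 ∧ (p - i).val / 2 < k then finShift hn (w p) m else w p

namespace LRB

set_option linter.unusedSectionVars false

variable {n : ℕ} [NeZero n]

lemma npos : 0 < n := Nat.pos_of_ne_zero (NeZero.ne n)

lemma sub_val (a b : Fin n) :
    (a - b).val = if b.val ≤ a.val then a.val - b.val else a.val + n - b.val := by
  have ha := a.isLt; have hb := b.isLt
  have key : (a - b).val = (n - b.val + a.val) % n := by rw [Fin.sub_def]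
  rw [key]
  split_ifs with h
  · have e : (n - b.val + a.val) = n + (a.val - b.val) := by omega
    rw [e, Nat.add_mod_left, Nat.mod_eq_of_lt (by omega)]
  · rw [Nat.mod_eq_of_lt (by omega)]
    omega

lemma sub_rebase (v w x : Fin n) :
    (x - w).val = if (w - v).val ≤ (x - v).val then (x - v).val - (w - v).val
      else (x - v).val + n - (w - v).val := by
  have h : x - w = (x - v) - (w - v) := by abel
  rw [h, sub_val]

lemma sub_val_lt (a b : Fin n) : (a - b).val < n := (a - b).isLt

lemma sub_eq_zero_iff' {a b : Fin n} : (a - b).val = 0 ↔ a = b := by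
  constructor
  · intro h
    have h2 : a - b = 0 := Fin.val_injective (by simpa using h)
    exact sub_eq_zero.mp h2
  · intro h; subst h; simp

lemma sub_inj {v x y : Fin n} (h : (x - v).val = (y - v).val) : x = y := by
  have h2 : x - v = y - v := Fin.val_injective h
  exact sub_left_injective h2

/-- point at position `k` from `v` -/
def pt (v : Fin n) (k : ℕ) : Fin n := v + ⟨k % n, Nat.mod_lt _ npos⟩

lemma pt_val (v : Fin n) {k : ℕ} (hk : k < n) : (pt v k - v).val = k := by
  unfold pt
  rw [add_sub_cancel_left]
  simp [Nat.mod_eq_of_lt hk]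

lemma mem_arcCC_iff {a b x : Fin n} : x ∈ arcCC a b ↔ (x - a).val ≤ (b - a).val := by
  have ha := a.isLt; have hb := b.isLt; have hx := x.isLt
  unfold arcCC
  split_ifs with h
  · rw [Fin.le_def] at h
    simp only [Finset.mem_filter, Finset.mem_univ, true_and, Fin.le_def]
    rw [sub_val, sub_val]
    split_ifs <;> omega
  · rw [Fin.le_def] at h
    simp only [Finset.mem_filter, Finset.mem_univ, true_and, Fin.le_def]
    rw [sub_val, sub_val]
    split_ifs <;> omega

lemma mem_arcOO_iff {a b x : Fin n} :
    x ∈ arcOO a b ↔ 0 < (x - a).val ∧ ((b - a).val = 0 ∨ (x - a).val < (b - a).val) := by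
  have ha := a.isLt; have hb := b.isLt; have hx := x.isLt
  unfold arcOO
  split_ifs with h
  · rw [Fin.lt_def] at h
    simp only [Finset.mem_filter, Finset.mem_univ, true_and, Fin.lt_def]
    rw [sub_val, sub_val]
    split_ifs <;> omega
  · rw [Fin.lt_def] at h
    simp only [Finset.mem_filter, Finset.mem_univ, true_and, Fin.lt_def]
    rw [sub_val, sub_val]
    split_ifs <;> omega

lemma sub_val_comm {a b : Fin n} (h : a ≠ b) : (a - b).val + (b - a).val = n := by
  have hab : a.val ≠ b.val := fun hh => h (Fin.val_injective hh)
  have ha := a.isLt; have hb := b.isLt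
  rw [sub_val, sub_val]
  split_ifs <;> omega

/-! ### Separation -/

def Sep (e h : Finset (Fin n)) : Prop :=
  ∃ a b : Fin n, (∀ x ∈ e, x ∈ arcCC a b) ∧ ∀ x ∈ h, x ∉ arcCC a b

lemma Sep.disjoint {e h : Finset (Fin n)} (s : Sep e h) : Disjoint e h := by
  obtain ⟨a, b, h1, h2⟩ := s
  rw [Finset.disjoint_left]
  intro x hxe hxh
  exact h2 x hxh (h1 x hxe)

lemma Sep.symm {e h : Finset (Fin n)} (hh : h.Nonempty) (s : Sep e h) : Sep h e := by
  obtain ⟨a, b, h1, h2⟩ := s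
  obtain ⟨z, hz⟩ := hh
  have hz2 := h2 z hz
  rw [mem_arcCC_iff] at hz2
  push_neg at hz2
  have hzlt := sub_val_lt z a
  have hBn : (b - a).val + 1 < n := by omega
  have e1 : (pt a ((b-a).val + 1) - a).val = (b-a).val + 1 := pt_val a hBn
  have e2 : (pt a (n - 1) - a).val = n - 1 := pt_val a (by omega : n - 1 < n)
  refine ⟨pt a ((b-a).val + 1), pt a (n - 1), ?_, ?_⟩
  · intro x hx
    have hx2 := h2 x hx
    rw [mem_arcCC_iff] at hx2 ⊢
    push_neg at hx2
    rw [sub_rebase a (pt a ((b-a).val + 1)) x,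
      sub_rebase a (pt a ((b-a).val + 1)) (pt a (n-1)), e1, e2]
    have := sub_val_lt x a
    split_ifs <;> omega
  · intro x hx
    have hx2 := h1 x hx
    rw [mem_arcCC_iff] at hx2 ⊢
    rw [sub_rebase a (pt a ((b-a).val + 1)) x,
      sub_rebase a (pt a ((b-a).val + 1)) (pt a (n-1)), e1, e2]
    have := sub_val_lt x a
    split_ifs <;> omega

lemma side_dichotomy {v t z : Fin n} (hvt : v ≠ t) (hzv : z ≠ v) (hzt : z ≠ t) :
    z ∈ arcOO v t ∨ z ∈ arcOO t v := by
  rw [mem_arcOO_iff, mem_arcOO_iff]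
  rw [sub_rebase v t z, sub_rebase v t v]
  have h1 : ((z : Fin n) - v).val ≠ 0 := by rw [Ne, sub_eq_zero_iff']; exact hzv
  have h2 : ((t : Fin n) - v).val ≠ 0 := by rw [Ne, sub_eq_zero_iff']; exact hvt.symm
  have h3 : ((z : Fin n) - v).val ≠ ((t : Fin n) - v).val := fun hh => hzt (sub_inj hh)
  have h4 : ((v : Fin n) - v).val = 0 := by simp
  rw [h4]
  have := sub_val_lt z v; have := sub_val_lt t v
  split_ifs <;> omega

lemma no_interleave {a b v t z₁ z₂ : Fin n} (hvt : v ≠ t)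
    (hv : (v - a).val ≤ (b - a).val) (ht : (t - a).val ≤ (b - a).val)
    (hz1 : ¬ (z₁ - a).val ≤ (b - a).val) (hz2 : ¬ (z₂ - a).val ≤ (b - a).val)
    (h1 : z₁ ∈ arcOO v t) (h2 : z₂ ∈ arcOO t v) : False := by
  rw [mem_arcOO_iff] at h1 h2
  rw [sub_rebase a v z₁, sub_rebase a v t] at h1
  rw [sub_rebase a t z₂, sub_rebase a t v] at h2
  have hne : (v - a).val ≠ (t - a).val := fun hh => hvt (sub_inj hh)
  have := sub_val_lt z₁ a; have := sub_val_lt z₂ a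
  have := sub_val_lt v a; have := sub_val_lt t a; have := sub_val_lt b a
  split_ifs at h1 h2 <;> omega

lemma gap {e h' : Finset (Fin n)} (sep : Sep e h') {v t : Fin n}
    (hv : v ∈ e) (ht : t ∈ e) (hvt : v ≠ t) :
    (∀ x ∈ h', x ∈ arcOO v t) ∨ (∀ x ∈ h', x ∈ arcOO t v) := by
  obtain ⟨a, b, hE, hH⟩ := sep
  have hva := hE v hv; have hta := hE t ht
  rw [mem_arcCC_iff] at hva hta
  have hside : ∀ x ∈ h', x ∈ arcOO v t ∨ x ∈ arcOO t v := by
    intro x hx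
    have hxa := hH x hx
    rw [mem_arcCC_iff] at hxa
    have hxv : x ≠ v := by rintro rfl; exact hxa hva
    have hxt : x ≠ t := by rintro rfl; exact hxa hta
    exact side_dichotomy hvt hxv hxt
  by_cases hc : ∃ z ∈ h', z ∈ arcOO t v
  · right
    intro x hx
    rcases hside x hx with h | h
    · obtain ⟨z, hz, hz2⟩ := hc
      have hza := hH z hz; rw [mem_arcCC_iff] at hza
      have hxa := hH x hx; rw [mem_arcCC_iff] at hxa
      exact absurd (no_interleave hvt hva hta hxa hza h hz2) (fun x => x)
    · exact h
  · left
    intro x hx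
    rcases hside x hx with h | h
    · exact h
    · exact absurd ⟨x, hx, h⟩ hc


/-! ### Cyclic sorting -/

lemma modsmall {x m : ℕ} (hm : 0 < m) (hx : x < 2*m) :
    x % m = if x < m then x else x - m := by
  split_ifs with h
  · exact Nat.mod_eq_of_lt h
  · rw [Nat.mod_eq_sub_mod (by omega), Nat.mod_eq_of_lt (by omega)]

lemma cyclicSorted_of_chain (a : Fin n) (l : List (Fin n))
    (hc : l.Chain' (fun x y => (x - a).val < (y - a).val)) : CyclicSorted l := by
  classical
  have htrans : IsTrans (Fin n) (fun x y => (x - a).val < (y - a).val) :=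
    ⟨fun x y z h1 h2 => lt_trans h1 h2⟩
  letI : Trans (fun x y : Fin n => (x - a).val < (y - a).val) (fun x y : Fin n => (x - a).val < (y - a).val)
      (fun x y : Fin n => (x - a).val < (y - a).val) := ⟨fun h1 h2 => lt_trans h1 h2⟩
  have hpw := (List.isChain_iff_pairwise (R := fun x y : Fin n => (x - a).val < (y - a).val)).mp hc
  have hsort : ∀ (i j : ℕ) (hi : i < l.length) (hj : j < l.length), i < j →
      ((l.get ⟨i, hi⟩ - a)).val < ((l.get ⟨j, hj⟩ - a)).val := by
    intro i j hi hj hij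
    exact List.pairwise_iff_get.mp hpw ⟨i, hi⟩ ⟨j, hj⟩ hij
  set p : Fin n → Bool := fun x => decide (x.val < a.val) with hp
  set k := l.findIdx p with hkdef
  have hkL : k ≤ l.length := List.findIdx_le_length (p := p)
  have hbefore : ∀ (i : ℕ) (hi : i < l.length), i < k → a.val ≤ (l.get ⟨i, hi⟩).val := by
    intro i hi hik
    have := List.not_of_lt_findIdx (p := p) (xs := l) (i := i) hik
    simp only [hp, decide_eq_false_iff_not, not_lt] at this
    simpa using this
  have hatk : ∀ (hk : k < l.length), (l.get ⟨k, hk⟩).val < a.val := by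
    intro hk
    have := List.findIdx_getElem (p := p) (xs := l) (w := hk)
    simp only [hp, decide_eq_true_eq] at this
    simpa [hkdef, hp] using this
  have hafter : ∀ (i : ℕ) (hi : i < l.length), k ≤ i → (l.get ⟨i, hi⟩).val < a.val := by
    intro i hi hki
    rcases eq_or_lt_of_le hki with h | h
    · subst h; exact hatk hi
    · have hkl : k < l.length := lt_trans h hi
      have h1 := hatk hkl
      have h2 := hsort k i hkl hi h
      rw [sub_val, sub_val] at h2
      have := (l.get ⟨i, hi⟩).isLt
      have := (l.get ⟨k, hkl⟩).isLt
      split_ifs at h2 <;> omega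
  have main : ∀ (j1 j2 : ℕ) (hj1 : j1 < l.length) (hj2 : j2 < l.length),
      ((j2 = j1 + 1 ∧ k ≤ j1) ∨ (j2 = j1 + 1 ∧ j2 < k) ∨
        (j1 = l.length - 1 ∧ j2 = 0 ∧ 0 < k ∧ k < l.length)) →
      (l.get ⟨j1, hj1⟩).val < (l.get ⟨j2, hj2⟩).val := by
    intro j1 j2 hj1 hj2 hcase
    have hv1 := (l.get ⟨j1, hj1⟩).isLt
    have hv2 := (l.get ⟨j2, hj2⟩).isLt
    rcases hcase with ⟨he, hk1⟩ | ⟨he, hk2⟩ | ⟨he1, he2, hk0, hkl⟩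
    · have r1 := hafter j1 hj1 hk1
      have r2 := hafter j2 hj2 (by omega)
      have hs := hsort j1 j2 hj1 hj2 (by omega)
      rw [sub_val, sub_val] at hs
      split_ifs at hs <;> omega
    · have r1 := hbefore j1 hj1 (by omega)
      have r2 := hbefore j2 hj2 (by omega)
      have hs := hsort j1 j2 hj1 hj2 (by omega)
      rw [sub_val, sub_val] at hs
      split_ifs at hs <;> omega
    · have r1 := hafter j1 hj1 (by omega)
      have r2 := hbefore j2 hj2 (by omega)
      omega
  refine ⟨k, ?_⟩
  show List.IsChain _ _
  rw [List.isChain_iff_getElem]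
  intro i hi
  show (l.rotate k).get ⟨i, by omega⟩ < (l.rotate k).get ⟨i + 1, by omega⟩
  rw [List.length_rotate] at hi
  have hL0 : 0 < l.length := by omega
  have g1 := List.get_rotate l k ⟨i, by rw [List.length_rotate]; omega⟩
  have g2 := List.get_rotate l k ⟨i + 1, by rw [List.length_rotate]; omega⟩
  rw [g1, g2, Fin.lt_def]
  apply main
  have m1 := modsmall hL0 (show i + k < 2 * l.length by omega)
  have m2 := modsmall hL0 (show i + 1 + k < 2 * l.length by omega)
  have hc1 : ((⟨i, by rw [List.length_rotate]; omega⟩ : Fin (l.rotate k).length) : ℕ) = i := rfl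
  have hc2 : ((⟨i + 1, by rw [List.length_rotate]; omega⟩ : Fin (l.rotate k).length) : ℕ) = i + 1 := rfl
  rw [hc1, hc2, m1, m2]
  split_ifs <;> omega



/-! ### sorted list of a finset, by position relative to a -/

def sortedOf (a : Fin n) (s : Finset (Fin n)) : List (Fin n) :=
  ((s.image (fun x => x - a)).sort (· ≤ ·)).map (fun x => x + a)

lemma sub_add_inj (a : Fin n) : Function.Injective (fun x : Fin n => x - a) := by
  intro x y hxy
  simpa using sub_left_injective hxy

lemma sortedOf_length (a : Fin n) (s : Finset (Fin n)) : (sortedOf a s).length = s.card := by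
  unfold sortedOf
  rw [List.length_map, Finset.length_sort, Finset.card_image_of_injective _ (sub_add_inj a)]

lemma mem_sortedOf {a x : Fin n} {s : Finset (Fin n)} : x ∈ sortedOf a s ↔ x ∈ s := by
  unfold sortedOf
  rw [List.mem_map]
  constructor
  · rintro ⟨y, hy, rfl⟩
    rw [Finset.mem_sort, Finset.mem_image] at hy
    obtain ⟨z, hz, rfl⟩ := hy
    simpa using hz
  · intro hx
    refine ⟨x - a, ?_, by simp⟩
    rw [Finset.mem_sort, Finset.mem_image]
    exact ⟨x, hx, rfl⟩

lemma sortedOf_chain (a : Fin n) (s : Finset (Fin n)) :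
    (sortedOf a s).Chain' (fun x y => (x - a).val < (y - a).val) := by
  unfold sortedOf
  show List.IsChain _ _
  rw [List.isChain_map]
  have hs := Finset.sortedLT_sort (s.image (fun x => x - a))
  have hc : ((s.image (fun x => x - a)).sort (· ≤ ·)).IsChain (· < ·) := hs.isChain
  apply hc.imp
  intro x y hxy
  simpa [add_sub_cancel_right] using hxy

lemma sortedOf_nodup (a : Fin n) (s : Finset (Fin n)) : (sortedOf a s).Nodup := by
  unfold sortedOf
  exact (Finset.sort_nodup _ _).map (add_left_injective a)

/-! ### cardinalities of the M1r pattern halves -/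

lemma card_filter_lt (r : ℕ) : (Finset.univ.filter fun i : Fin (2*r) => (i : ℕ) < r).card = r := by
  rw [Finset.card_filter]
  rw [Fin.sum_univ_eq_sum_range (fun i => if i < r then 1 else 0) (2*r)]
  rw [← Finset.card_filter]
  have h : (Finset.range (2*r)).filter (fun i => i < r) = Finset.range r := by
    ext i
    simp only [Finset.mem_filter, Finset.mem_range]
    omega
  rw [h, Finset.card_range]

lemma card_filter_ge (r : ℕ) : (Finset.univ.filter fun i : Fin (2*r) => r ≤ (i : ℕ)).card = r := by
  classical
  have key := Finset.card_filter_add_card_filter_not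
    (s := (Finset.univ : Finset (Fin (2*r)))) (p := fun i : Fin (2*r) => (i : ℕ) < r)
  have h2 : (Finset.univ.filter fun i : Fin (2*r) => ¬ ((i : ℕ) < r)) =
      (Finset.univ.filter fun i : Fin (2*r) => r ≤ (i : ℕ)) := by
    apply Finset.filter_congr
    intro i _
    simp [not_lt]
  rw [card_filter_lt r, h2, Finset.card_univ, Fintype.card_fin] at key
  omega


/-! ### Sep implies copy -/

lemma sep_to_copy {r : ℕ} {S : Finset (Finset (Fin n))} {e h : Finset (Fin n)}
    (he : e ∈ S) (hh : h ∈ S) (ce : e.card = r) (ch : h.card = r) (sep : Sep e h) :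
    HasCopy (M1r r) S := by
  classical
  obtain ⟨a, b, hin, hout⟩ := sep
  set le := sortedOf a e with hledef
  set lh := sortedOf a h with hlhdef
  set l := le ++ lh with hl
  have hlel : le.length = r := by rw [hledef, sortedOf_length, ce]
  have hlhl : lh.length = r := by rw [hlhdef, sortedOf_length, ch]
  have hlen : l.length = 2*r := by rw [hl, List.length_append, hlel, hlhl]; omega
  have hEb : ∀ x ∈ le, (x - a).val ≤ (b - a).val := fun x hx =>
    mem_arcCC_iff.mp (hin x (mem_sortedOf.mp hx))
  have hHb : ∀ x ∈ lh, (b - a).val < (x - a).val := by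
    intro x hx
    have h2 := hout x (mem_sortedOf.mp hx)
    rw [mem_arcCC_iff] at h2; omega
  have hchain : l.Chain' (fun x y => (x - a).val < (y - a).val) := by
    apply (sortedOf_chain a e).append (sortedOf_chain a h)
    intro x hx y hy
    have hx' := hEb x (List.mem_of_mem_getLast? hx)
    have hy' := hHb y (List.mem_of_mem_head? hy)
    omega
  have hnd : l.Nodup := by
    apply (sortedOf_nodup a e).append (sortedOf_nodup a h)
    intro x hx hx2
    have := hEb x hx; have := hHb x hx2; omega
  have hcs : CyclicSorted l := cyclicSorted_of_chain a l hchain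
  refine ⟨fun i : Fin (2*r) => l.get ⟨i.val, by rw [hlen]; exact i.isLt⟩, ?_, ?_, ?_⟩
  · intro i j hij
    have h2 := (List.Nodup.get_inj_iff hnd).mp hij
    have h3 := congrArg Fin.val h2
    exact Fin.ext h3
  · have hofn : List.ofFn (fun i : Fin (2*r) => l.get ⟨i.val, by rw [hlen]; exact i.isLt⟩) = l := by
      apply List.ext_get (by simp [hlen])
      intro i h1 h2
      rw [List.get_ofFn]
      rfl
    exact (congrArg CyclicSorted hofn).mpr hcs
  · intro ed hed
    have hed2 : ed = (Finset.univ.filter fun i : Fin (2 * r) => (i : ℕ) < r) ∨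
        ed = (Finset.univ.filter fun i : Fin (2 * r) => r ≤ (i : ℕ)) := by
      rcases Finset.mem_insert.mp hed with h | h
      · exact Or.inl h
      · exact Or.inr (Finset.mem_singleton.mp h)
    rcases hed2 with rfl | rfl
    · have him : (Finset.univ.filter fun i : Fin (2 * r) => (i : ℕ) < r).image
          (fun i : Fin (2*r) => l.get ⟨i.val, by rw [hlen]; exact i.isLt⟩) = e := by
        ext x
        simp only [Finset.mem_image, Finset.mem_filter, Finset.mem_univ, true_and]
        constructor
        · rintro ⟨i, hir, rfl⟩
          have hget : l.get ⟨i.val, by rw [hlen]; exact i.isLt⟩ = le.get ⟨i.val, by omega⟩ := by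
            simp only [List.get_eq_getElem, hl]
            exact List.getElem_append_left (by omega)
          rw [hget]
          exact mem_sortedOf.mp (le.get_mem _)
        · intro hx
          have hx2 : x ∈ le := mem_sortedOf.mpr hx
          obtain ⟨j, hj⟩ := List.mem_iff_get.mp hx2
          refine ⟨⟨j.val, by omega⟩, by simpa using (by omega : (j : ℕ) < r), ?_⟩
          have hget : l.get ⟨j.val, by rw [hlen]; omega⟩ = le.get ⟨j.val, j.isLt⟩ := by
            simp only [List.get_eq_getElem, hl]
            exact List.getElem_append_left (by omega)
          rw [hget]
          simpa using hj
      exact (congrArg (· ∈ S) him).mpr he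
    · have him : (Finset.univ.filter fun i : Fin (2 * r) => r ≤ (i : ℕ)).image
          (fun i : Fin (2*r) => l.get ⟨i.val, by rw [hlen]; exact i.isLt⟩) = h := by
        ext x
        simp only [Finset.mem_image, Finset.mem_filter, Finset.mem_univ, true_and]
        constructor
        · rintro ⟨i, hir, rfl⟩
          have hget : l.get ⟨i.val, by rw [hlen]; exact i.isLt⟩ =
              lh.get ⟨i.val - r, by have := i.isLt; omega⟩ := by
            simp only [List.get_eq_getElem, hl]
            rw [List.getElem_append_right (by omega)]
            congr 1
            omega
          rw [hget]
          exact mem_sortedOf.mp (lh.get_mem _)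
        · intro hx
          have hx2 : x ∈ lh := mem_sortedOf.mpr hx
          obtain ⟨j, hj⟩ := List.mem_iff_get.mp hx2
          refine ⟨⟨r + j.val, by omega⟩, by simpa using (by omega : r ≤ r + (j : ℕ)), ?_⟩
          have hget : l.get ⟨r + j.val, by rw [hlen]; omega⟩ = lh.get ⟨j.val, j.isLt⟩ := by
            simp only [List.get_eq_getElem, hl]
            rw [List.getElem_append_right (by omega)]
            congr 1
            omega
          rw [hget]
          simpa using hj
      exact (congrArg (· ∈ S) him).mpr hh


/-! ### copy implies Sep -/

lemma le_arc_helper1 {x y z : Fin n} (h1 : x ≤ y) (h2 : y ≤ z) :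
    (y - x).val ≤ (z - x).val := by
  rw [Fin.le_def] at h1 h2
  rw [sub_val, sub_val]
  have := x.isLt; have := y.isLt; have := z.isLt
  split_ifs <;> omega

lemma le_arc_helper2 {x y z : Fin n} (h0 : x ≤ z) (h1 : y < x ∨ z < y) :
    ¬ ((y - x).val ≤ (z - x).val) := by
  rw [Fin.le_def] at h0
  rw [Fin.lt_def, Fin.lt_def] at h1
  rw [sub_val, sub_val]
  have := x.isLt; have := y.isLt; have := z.isLt
  split_ifs <;> omega

lemma le_arc_helper3 {x y z : Fin n} (h0 : z < x) (h1 : y ≤ z ∨ x ≤ y) :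
    (y - x).val ≤ (z - x).val := by
  rw [Fin.lt_def] at h0
  rw [Fin.le_def, Fin.le_def] at h1
  rw [sub_val, sub_val]
  have := x.isLt; have := y.isLt; have := z.isLt
  split_ifs <;> omega

lemma le_arc_helper4 {x y z : Fin n} (h0 : z < x) (h1 : z < y) (h2 : y < x) :
    ¬ ((y - x).val ≤ (z - x).val) := by
  rw [Fin.lt_def] at h0 h1 h2
  rw [sub_val, sub_val]
  have := x.isLt; have := y.isLt; have := z.isLt
  split_ifs <;> omega

lemma copy_to_sep {r : ℕ} (hr : 0 < r) {S : Finset (Finset (Fin n))}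
    (hc : HasCopy (M1r r) S) :
    ∃ e ∈ S, ∃ h ∈ S, e.card = r ∧ h.card = r ∧ Sep e h := by
  classical
  obtain ⟨f, finj, ⟨k₀, hch⟩, fim⟩ := hc
  have hA : (Finset.univ.filter fun i : Fin (2 * r) => (i : ℕ) < r) ∈ (M1r r).edges := by
    exact Finset.mem_insert_self _ _
  have hB : (Finset.univ.filter fun i : Fin (2 * r) => r ≤ (i : ℕ)) ∈ (M1r r).edges := by
    exact Finset.mem_insert_of_mem (Finset.mem_singleton_self _)
  have he := fim _ hA
  have hh := fim _ hB
  refine ⟨_, he, _, hh, ?_, ?_, ?_⟩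
  · exact (Finset.card_image_of_injective _ finj).trans (card_filter_lt r)
  · exact (Finset.card_image_of_injective _ finj).trans (card_filter_ge r)
  set l := List.ofFn f with hldef
  have hlen : l.length = 2*r := by rw [hldef, List.length_ofFn]; rfl
  have hL0 : 0 < l.length := by omega
  set k := k₀ % l.length with hkdef
  have hkL : k < l.length := Nat.mod_lt _ hL0
  have hch2 : (l.rotate k).Chain' (· < ·) := by rw [hkdef, List.rotate_mod]; exact hch
  have hpw := List.isChain_iff_pairwise.mp hch2
  have hsort : ∀ (i j : ℕ) (hi : i < l.length) (hj : j < l.length), i < j →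
      (l.rotate k).get ⟨i, by rw [List.length_rotate]; exact hi⟩ <
      (l.rotate k).get ⟨j, by rw [List.length_rotate]; exact hj⟩ := by
    intro i j hi hj hij
    exact List.pairwise_iff_get.mp hpw _ _ hij
  have hgetf : ∀ (m : ℕ) (hm : m < l.length) (hm2 : m < 2*r),
      l.get ⟨m, hm⟩ = f ⟨m, hm2⟩ := by
    intro m hm hm2
    have h2 := List.get_ofFn f ⟨m, hm⟩
    refine h2.trans ?_
    congr 1
  have hrepr : ∀ i : Fin (2*r), ∃ j, ∃ hj : j < l.length, (j + k) % l.length = i.val ∧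
      f i = (l.rotate k).get ⟨j, by rw [List.length_rotate]; exact hj⟩ := by
    intro i
    have hiv := i.isLt
    set j := if i.val < k then i.val + l.length - k else i.val - k with hjdef
    have hjlt : j < l.length := by rw [hjdef]; split_ifs <;> omega
    have hjk : (j + k) % l.length = i.val := by
      rw [modsmall hL0 (by rw [hjdef]; split_ifs <;> omega), hjdef]
      split_ifs <;> omega
    have h5 := List.get_rotate l k ⟨j, by rw [List.length_rotate]; exact hjlt⟩
    have h6 := hgetf ((j + k) % l.length) (Nat.mod_lt _ hL0) (by omega)
    have h7 : f (⟨(j + k) % l.length, by omega⟩ : Fin (2*r)) = f i := by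
      congr 1
      apply Fin.ext
      simpa using hjk
    exact ⟨j, hjlt, hjk, (h5.trans (h6.trans h7)).symm⟩
  have hmemE : ∀ x ∈ (Finset.univ.filter fun i : Fin (2 * r) => (i : ℕ) < r).image f,
      ∃ j, ∃ hj : j < l.length, ((j + k) % l.length < r) ∧
      x = (l.rotate k).get ⟨j, by rw [List.length_rotate]; exact hj⟩ := by
    intro x hx
    replace hx := Finset.mem_image.mp hx
    obtain ⟨i, hi, rfl⟩ := hx
    replace hi := Finset.mem_filter.mp hi
    obtain ⟨j, hj, hjk, hje⟩ := hrepr i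
    exact ⟨j, hj, by rw [hjk]; exact hi.2, hje⟩
  have hmemH : ∀ x ∈ (Finset.univ.filter fun i : Fin (2 * r) => r ≤ (i : ℕ)).image f,
      ∃ j, ∃ hj : j < l.length, (r ≤ (j + k) % l.length) ∧
      x = (l.rotate k).get ⟨j, by rw [List.length_rotate]; exact hj⟩ := by
    intro x hx
    replace hx := Finset.mem_image.mp hx
    obtain ⟨i, hi, rfl⟩ := hx
    replace hi := Finset.mem_filter.mp hi
    obtain ⟨j, hj, hjk, hje⟩ := hrepr i
    exact ⟨j, hj, by rw [hjk]; exact hi.2, hje⟩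
  by_cases hkc : k = 0 ∨ r ≤ k
  · -- contiguous block case
    set p := if k = 0 then 0 else 2*r - k with hpdef
    have hpbound : p + r - 1 < l.length := by rw [hlen, hpdef]; split_ifs <;> omega
    have hpbound2 : p < l.length := by rw [hlen, hpdef]; split_ifs <;> omega
    have hQ : ∀ j, j < l.length → ((j + k) % l.length < r ↔ (p ≤ j ∧ j ≤ p + r - 1)) := by
      intro j hj
      rw [hlen] at hj hkL ⊢
      rw [modsmall (by omega) (by omega), hpdef]
      rcases hkc with h0 | h0 <;> split_ifs <;> omega
    refine ⟨(l.rotate k).get ⟨p, by rw [List.length_rotate]; exact hpbound2⟩,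
      (l.rotate k).get ⟨p + r - 1, by rw [List.length_rotate]; exact hpbound⟩, ?_, ?_⟩
    · intro x hx
      obtain ⟨j, hj, hjr, rfl⟩ := hmemE x hx
      rw [mem_arcCC_iff]
      have hjq := (hQ j hj).mp hjr
      have h1 : (l.rotate k).get ⟨p, by rw [List.length_rotate]; exact hpbound2⟩ ≤
          (l.rotate k).get ⟨j, by rw [List.length_rotate]; exact hj⟩ := by
        rcases eq_or_lt_of_le hjq.1 with h | h
        · apply le_of_eq; congr 1; exact Fin.ext h
        · exact le_of_lt (hsort p j hpbound2 hj h)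
      have h2 : (l.rotate k).get ⟨j, by rw [List.length_rotate]; exact hj⟩ ≤
          (l.rotate k).get ⟨p + r - 1, by rw [List.length_rotate]; exact hpbound⟩ := by
        rcases eq_or_lt_of_le hjq.2 with h | h
        · apply le_of_eq; congr 1; exact Fin.ext h
        · exact le_of_lt (hsort j (p + r - 1) hj hpbound h)
      exact le_arc_helper1 h1 h2
    · intro x hx
      obtain ⟨j, hj, hjr, rfl⟩ := hmemH x hx
      rw [mem_arcCC_iff]
      have hjq : ¬ (p ≤ j ∧ j ≤ p + r - 1) := by
        intro hcon
        have := (hQ j hj).mpr hcon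
        omega
      have hj2 : j < p ∨ p + r - 1 < j := by omega
      have hle : (l.rotate k).get ⟨p, by rw [List.length_rotate]; exact hpbound2⟩ ≤
          (l.rotate k).get ⟨p + r - 1, by rw [List.length_rotate]; exact hpbound⟩ := by
        rcases Nat.eq_or_lt_of_le (show p ≤ p + r - 1 by omega) with h | h
        · apply le_of_eq; congr 1; exact Fin.ext h
        · exact le_of_lt (hsort p (p + r - 1) hpbound2 hpbound h)
      apply le_arc_helper2 hle
      rcases hj2 with h | h
      · exact Or.inl (hsort j p hj hpbound2 h)
      · exact Or.inr (hsort (p + r - 1) j hpbound hj h)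
  · -- wrap-around case : 0 < k < r
    push_neg at hkc
    obtain ⟨hk0, hkr⟩ := hkc
    have hk0' : 0 < k := Nat.pos_of_ne_zero hk0
    set q := r - k - 1 with hqdef
    set p := 2*r - k with hpdef
    have hqb : q < l.length := by rw [hlen]; omega
    have hpb : p < l.length := by rw [hlen]; omega
    have hQ : ∀ j, j < l.length → ((j + k) % l.length < r ↔ (j ≤ q ∨ p ≤ j)) := by
      intro j hj
      rw [hlen] at hj hkL ⊢
      rw [modsmall (by omega) (by omega)]
      split_ifs <;> omega
    have hba : (l.rotate k).get ⟨q, by rw [List.length_rotate]; exact hqb⟩ <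
        (l.rotate k).get ⟨p, by rw [List.length_rotate]; exact hpb⟩ :=
      hsort q p hqb hpb (by omega)
    refine ⟨(l.rotate k).get ⟨p, by rw [List.length_rotate]; exact hpb⟩,
      (l.rotate k).get ⟨q, by rw [List.length_rotate]; exact hqb⟩, ?_, ?_⟩
    · intro x hx
      obtain ⟨j, hj, hjr, rfl⟩ := hmemE x hx
      rw [mem_arcCC_iff]
      have hjq := (hQ j hj).mp hjr
      apply le_arc_helper3 hba
      rcases hjq with h | h
      · left
        rcases eq_or_lt_of_le h with h2 | h2
        · apply le_of_eq; congr 1; exact Fin.ext h2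
        · exact le_of_lt (hsort j q hj hqb h2)
      · right
        rcases eq_or_lt_of_le h with h2 | h2
        · apply le_of_eq; congr 1; exact Fin.ext h2
        · exact le_of_lt (hsort p j hpb hj h2)
    · intro x hx
      obtain ⟨j, hj, hjr, rfl⟩ := hmemH x hx
      rw [mem_arcCC_iff]
      have hjq : ¬ (j ≤ q ∨ p ≤ j) := by
        intro hcon
        have := (hQ j hj).mpr hcon
        omega
      push_neg at hjq
      exact le_arc_helper4 hba (hsort q j hqb hj (by omega)) (hsort j p hj hpb (by omega))


/-! ### saturation toolkit -/

variable {r : ℕ} {H : Finset (Finset (Fin n))}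

lemma no2sep (hnc : ¬ HasCopy (M1r r) H) (hcards : ∀ h ∈ H, h.card = r)
    {h₁ h₂ : Finset (Fin n)} (m1 : h₁ ∈ H) (m2 : h₂ ∈ H) (s : Sep h₁ h₂) : False :=
  hnc (sep_to_copy m1 m2 (hcards _ m1) (hcards _ m2) s)

lemma partner (hr : 0 < r) (hH : IsSat (M1r r) r H) {e : Finset (Fin n)}
    (ce : e.card = r) (he : e ∉ H) : ∃ h ∈ H, Sep e h := by
  obtain ⟨hcards, hnc, hsat⟩ := hH
  obtain ⟨e₁, he₁, h₁, hh₁, ce₁, ch₁, s⟩ := copy_to_sep hr (hsat e ce he)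
  have hne1 : e₁.Nonempty := Finset.card_pos.mp (by omega)
  have hne2 : h₁.Nonempty := Finset.card_pos.mp (by omega)
  have hd : e₁ ≠ h₁ := by
    intro hcon
    rw [hcon] at hne1
    have h3 := s.disjoint
    rw [hcon] at h3
    obtain ⟨z, hz⟩ := hne1
    exact Finset.disjoint_left.mp h3 hz hz
  rcases Finset.mem_insert.mp he₁ with rfl | he₁'
  · rcases Finset.mem_insert.mp hh₁ with h | hh₁'
    · exact absurd h.symm (by simpa using hd)
    · exact ⟨h₁, hh₁', s⟩
  · rcases Finset.mem_insert.mp hh₁ with rfl | hh₁'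
    · exact ⟨e₁, he₁', s.symm hne2⟩
    · exact absurd (sep_to_copy he₁' hh₁' ce₁ ch₁ s) hnc

lemma klemma (hr : 0 < r) (hH : IsSat (M1r r) r H) {v t : Fin n} (hvt : v ≠ t)
    (K1 : ∀ h' ∈ H, ¬ (∀ x ∈ h', x ∈ arcOO v t))
    (K2 : ∀ h' ∈ H, ¬ (∀ x ∈ h', x ∈ arcOO t v)) :
    ∀ e : Finset (Fin n), e.card = r → v ∈ e → t ∈ e → e ∈ H := by
  intro e ce hv ht
  by_contra hne
  obtain ⟨h', hh', s⟩ := partner hr hH ce hne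
  rcases gap s hv ht hvt with h | h
  · exact K1 h' hh' h
  · exact K2 h' hh' h

lemma sub_injective (v : Fin n) : Function.Injective (fun x : Fin n => (x - v).val) :=
  fun _ _ hxy => sub_inj hxy

lemma band_pigeonhole {h' : Finset (Fin n)} {v : Fin n} {lo hi : ℕ}
    (hsub : ∀ x ∈ h', lo ≤ (x - v).val ∧ (x - v).val ≤ hi) : h'.card ≤ hi + 1 - lo := by
  have himg : h'.image (fun x => (x - v).val) ⊆ Finset.Icc lo hi := by
    intro m hm
    rw [Finset.mem_image] at hm
    obtain ⟨x, hx, rfl⟩ := hm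
    rw [Finset.mem_Icc]
    exact hsub x hx
  calc h'.card = (h'.image (fun x => (x - v).val)).card :=
        (Finset.card_image_of_injective _ (sub_injective v)).symm
    _ ≤ (Finset.Icc lo hi).card := Finset.card_le_card himg
    _ = hi + 1 - lo := Nat.card_Icc lo hi

lemma card_band (v : Fin n) {lo hi : ℕ} (hhi : hi < n) :
    (Finset.univ.filter (fun x : Fin n => lo ≤ (x - v).val ∧ (x - v).val ≤ hi)).card
      = hi + 1 - lo := by
  rw [← Nat.card_Icc]
  apply Finset.card_bij' (fun x _ => (x - v).val) (fun k _ => pt v k)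
  · intro x hx
    rw [Finset.mem_filter] at hx
    rw [Finset.mem_Icc]
    exact hx.2
  · intro k hk
    rw [Finset.mem_Icc] at hk
    rw [Finset.mem_filter]
    refine ⟨Finset.mem_univ _, ?_⟩
    rw [pt_val v (by omega)]
    exact hk
  · intro x hx
    apply sub_inj
    rw [pt_val v (by omega : (x - v).val < n)]
  · intro k hk
    rw [Finset.mem_Icc] at hk
    exact pt_val v (by omega)


/-! ### pointwise arc characterizations relative to a base vertex -/

lemma arcOO_vj_val {v j x : Fin n} (hjv : j ≠ v) :
    x ∈ arcOO v j ↔ 0 < (x - v).val ∧ (x - v).val < (j - v).val := by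
  rw [mem_arcOO_iff]
  have h2 : ((j : Fin n) - v).val ≠ 0 := by rw [Ne, sub_eq_zero_iff']; exact hjv
  omega

lemma arcOO_jv_val {v j x : Fin n} (hjv : j ≠ v) :
    x ∈ arcOO j v ↔ (j - v).val < (x - v).val := by
  rw [mem_arcOO_iff]
  rw [sub_rebase v j x, sub_rebase v j v]
  have h2 : ((j : Fin n) - v).val ≠ 0 := by rw [Ne, sub_eq_zero_iff']; exact hjv
  have h4 : ((v : Fin n) - v).val = 0 := by simp
  rw [h4]
  have := sub_val_lt x v; have := sub_val_lt j v
  have h5 : (x - v).val = (j - v).val → x = j := fun hh => sub_inj hh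
  constructor
  · intro hc
    split_ifs at hc <;> omega
  · intro hc
    have hxj : (x - v).val ≠ (j - v).val := by omega
    split_ifs <;> omega

lemma arcCC_vj_val {v j x : Fin n} :
    x ∈ arcCC v j ↔ (x - v).val ≤ (j - v).val := mem_arcCC_iff

lemma arcCC_jv_val {v j x : Fin n} (hjv : j ≠ v) :
    x ∈ arcCC j v ↔ (x = v ∨ (j - v).val ≤ (x - v).val) := by
  rw [mem_arcCC_iff]
  rw [sub_rebase v j x, sub_rebase v j v]
  have h2 : ((j : Fin n) - v).val ≠ 0 := by rw [Ne, sub_eq_zero_iff']; exact hjv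
  have h4 : ((v : Fin n) - v).val = 0 := by simp
  rw [h4]
  have := sub_val_lt x v; have := sub_val_lt j v
  have h5 : x = v ↔ (x - v).val = 0 := ⟨fun hh => by rw [hh]; simp, fun hh => sub_eq_zero_iff'.mp hh⟩
  rw [h5]
  split_ifs <;> omega

/-! ### the master lemma -/

theorem master (hr : 2 ≤ r) (hn : 2 * r ≤ n) (hH : IsSat (M1r r) r H) (v : Fin n) :
    ∃ E Q : ℕ, r - 1 ≤ E ∧ E ≤ n - r ∧ r ≤ Q ∧ Q ≤ n - r + 1 ∧ E ≤ Q ∧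
      (∃ h ∈ H, v ∈ h) ∧
      (∀ j, IsRho H v j ↔ (j - v).val = E) ∧
      (∀ j, IsLam H v j ↔ (j - v).val = Q) ∧
      (∀ j : Fin n, E ≤ (j - v).val → (j - v).val ≤ Q →
        ∀ e : Finset (Fin n), e.card = r → v ∈ e → j ∈ e → e ∈ H) := by
  classical
  have hr0 : 0 < r := by omega
  have hn4 : 4 ≤ n := by omega
  obtain ⟨hcards, hnc, hsat⟩ := id hH
  -- H is nonempty
  have hHne : H.Nonempty := by
    have hcard_univ : r ≤ (Finset.univ : Finset (Fin n)).card := by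
      rw [Finset.card_univ, Fintype.card_fin]; omega
    obtain ⟨e, _, hce⟩ := Finset.exists_subset_card_eq hcard_univ
    by_cases he : e ∈ H
    · exact ⟨e, he⟩
    · obtain ⟨h, hh, _⟩ := partner hr0 hH hce he
      exact ⟨h, hh⟩
  -- minimal sup edge
  obtain ⟨hb, hbH, hbmin⟩ := Finset.exists_min_image H
    (fun h => h.sup (fun x => (x - v).val)) hHne
  have hbne : hb.Nonempty := Finset.card_pos.mp (by rw [hcards hb hbH]; omega)
  obtain ⟨t, htb, htT0⟩ := Finset.exists_mem_eq_sup hb hbne (fun x => (x - v).val)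
  have htT : hb.sup (fun x => (x - v).val) = (t - v).val := htT0
  have hbsub : ∀ x ∈ hb, (x - v).val ≤ (t - v).val := by
    intro x hx
    have h2 : (x - v).val ≤ hb.sup (fun x => (x - v).val) :=
      Finset.le_sup (f := fun x => (x - v).val) hx
    omega
  have hbmin2 : ∀ h' ∈ H, (t - v).val ≤ h'.sup (fun x => (x - v).val) := by
    intro h' hh'
    have h3 : hb.sup (fun x => (x - v).val) ≤ h'.sup (fun x => (x - v).val) := hbmin h' hh'
    omega
  have hTr : r - 1 ≤ (t - v).val := by
    have h2 := band_pigeonhole (h' := hb) (v := v) (lo := 0) (hi := (t - v).val)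
      (fun x hx => ⟨Nat.zero_le _, hbsub x hx⟩)
    rw [hcards hb hbH] at h2
    omega
  have hTn : (t - v).val < n := sub_val_lt t v
  have htv : t ≠ v := by
    intro hcon
    rw [hcon] at hTr
    simp at hTr
    omega
  -- generic killers
  have kill_sup : ∀ w : Fin n, w ≠ v → (w - v).val ≤ (t - v).val →
      ∀ h' ∈ H, ¬(∀ x ∈ h', x ∈ arcOO v w) := by
    intro w hwv hwT h' hh' hcon
    have hsup : h'.sup (fun x => (x - v).val) < (t - v).val := by
      rw [Finset.sup_lt_iff (by simpa using (show 0 < (t - v).val by omega)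
        : (⊥ : ℕ) < (t - v).val)]
      intro x hx
      have := (arcOO_vj_val hwv).mp (hcon x hx)
      omega
    have := hbmin2 h' hh'
    omega
  have kill_pigeon_low : ∀ w : Fin n, w ≠ v → (w - v).val ≤ r →
      ∀ h' ∈ H, ¬(∀ x ∈ h', x ∈ arcOO v w) := by
    intro w hwv hwr h' hh' hcon
    have hband := band_pigeonhole (h' := h') (v := v) (lo := 1) (hi := r - 1) (fun x hx => by
      have := (arcOO_vj_val hwv).mp (hcon x hx)
      omega)
    rw [hcards h' hh'] at hband
    omega
  have kill_pigeon_high : ∀ w : Fin n, w ≠ v → n - r ≤ (w - v).val →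
      ∀ h' ∈ H, ¬(∀ x ∈ h', x ∈ arcOO w v) := by
    intro w hwv hwr h' hh' hcon
    have hband := band_pigeonhole (h' := h') (v := v) (lo := n - r + 1) (hi := n - 1)
      (fun x hx => by
        have h2 := (arcOO_jv_val hwv).mp (hcon x hx)
        have := sub_val_lt x v
        omega)
    rw [hcards h' hh'] at hband
    omega
  have kill_sep_high : ∀ (w : Fin n) (hE : Finset (Fin n)), w ≠ v → hE ∈ H →
      (∀ x ∈ hE, (x - v).val ≤ (w - v).val) →
      ∀ h' ∈ H, ¬(∀ x ∈ h', x ∈ arcOO w v) := by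
    intro w hE hwv hEH hEsub h' hh' hcon
    apply no2sep hnc hcards hEH hh'
    refine ⟨v, w, fun x hx => arcCC_vj_val.mpr (hEsub x hx), fun x hx hmem => ?_⟩
    have h2 := (arcOO_jv_val hwv).mp (hcon x hx)
    have h3 := arcCC_vj_val.mp hmem
    omega
  have kill_sep_low : ∀ (w : Fin n) (h1 : Finset (Fin n)), w ≠ v → h1 ∈ H →
      (∀ x ∈ h1, x = v ∨ (w - v).val ≤ (x - v).val) →
      ∀ h' ∈ H, ¬(∀ x ∈ h', x ∈ arcOO v w) := by
    intro w h1 hwv h1H h1sub h' hh' hcon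
    apply no2sep hnc hcards h1H hh'
    refine ⟨w, v, fun x hx => (arcCC_jv_val hwv).mpr (h1sub x hx), fun x hx hmem => ?_⟩
    have h2 := (arcOO_vj_val hwv).mp (hcon x hx)
    have h3 := (arcCC_jv_val hwv).mp hmem
    have h4 : x ≠ v := by
      intro hcon2
      rw [hcon2] at h2
      simp at h2
    rcases h3 with h3 | h3
    · exact h4 h3
    · omega
  -- construction of r-sets through v and w within a band
  have mkset : ∀ (w : Fin n) (lo hi : ℕ), w ≠ v → hi < n → 0 < lo → r - 2 ≤ hi + 1 - lo →
      ¬(lo ≤ (w - v).val ∧ (w - v).val ≤ hi) →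
      ∃ e : Finset (Fin n), e.card = r ∧ v ∈ e ∧ w ∈ e ∧
        ∀ x ∈ e, x = v ∨ x = w ∨ (lo ≤ (x - v).val ∧ (x - v).val ≤ hi) := by
    intro w lo hi hwv hhi hlo hcard hwout
    have hbc : r - 2 ≤ (Finset.univ.filter
        (fun x : Fin n => lo ≤ (x - v).val ∧ (x - v).val ≤ hi)).card := by
      rw [card_band v hhi]; omega
    obtain ⟨Y, hYsub, hYcard⟩ := Finset.exists_subset_card_eq hbc
    have hYmem : ∀ x ∈ Y, lo ≤ (x - v).val ∧ (x - v).val ≤ hi := by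
      intro x hx
      have := hYsub hx
      rw [Finset.mem_filter] at this
      exact this.2
    have hvY : v ∉ Y := by
      intro hcon
      have := hYmem v hcon
      simp at this
      omega
    have hwY : w ∉ Y := fun hcon => hwout (hYmem w hcon)
    refine ⟨insert v (insert w Y), ?_, Finset.mem_insert_self _ _,
      Finset.mem_insert_of_mem (Finset.mem_insert_self _ _), ?_⟩
    · rw [Finset.card_insert_of_notMem (by
        rw [Finset.mem_insert]
        push_neg
        exact ⟨fun hh => hwv hh.symm, hvY⟩), Finset.card_insert_of_notMem hwY, hYcard]
      omega
    · intro x hx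
      rw [Finset.mem_insert, Finset.mem_insert] at hx
      rcases hx with rfl | rfl | hx
      · exact Or.inl rfl
      · exact Or.inr (Or.inl rfl)
      · exact Or.inr (Or.inr (hYmem x hx))
  -- core for the pair (v, t)
  have core_t : ∀ e : Finset (Fin n), e.card = r → v ∈ e → t ∈ e → e ∈ H :=
    klemma hr0 hH (fun hh => htv hh.symm)
      (kill_sup t htv (by omega))
      (kill_sep_high t hb htv hbH hbsub)
  -- positive degree
  have hdeg : ∃ h ∈ H, v ∈ h := by
    have hsub : ({v, t} : Finset (Fin n)) ⊆ Finset.univ := Finset.subset_univ _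
    have hc2 : ({v, t} : Finset (Fin n)).card ≤ r := by
      have := Finset.card_insert_le v ({t} : Finset (Fin n))
      have h2 : ({t} : Finset (Fin n)).card = 1 := Finset.card_singleton t
      omega
    have hcu : r ≤ (Finset.univ : Finset (Fin n)).card := by
      rw [Finset.card_univ, Fintype.card_fin]; omega
    obtain ⟨e, hsube, _, hecard⟩ := Finset.exists_subsuperset_card_eq hsub hc2 hcu
    have hve : v ∈ e := hsube (by simp)
    have hte : t ∈ e := hsube (by simp)
    exact ⟨e, core_t e hecard hve hte, hve⟩
  -- T ≤ n - r
  have hTnr : (t - v).val ≤ n - r := by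
    by_contra hT
    push_neg at hT
    have hnru : n - r < n := by omega
    obtain ⟨u, huval⟩ : ∃ u : Fin n, (u - v).val = n - r := ⟨pt v (n - r), pt_val v hnru⟩
    have huv : u ≠ v := by
      intro hcon
      rw [hcon] at huval
      simp at huval
      omega
    have core_u : ∀ e : Finset (Fin n), e.card = r → v ∈ e → u ∈ e → e ∈ H :=
      klemma hr0 hH (fun hh => huv hh.symm)
        (kill_sup u huv (by omega))
        (kill_pigeon_high u huv (by omega))
    obtain ⟨e, hecard, hve, hue, hemem⟩ := mkset u 1 (n - r - 1) huv (by omega) (by omega)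
      (by omega) (by omega)
    have heH : e ∈ H := core_u e hecard hve hue
    have hesup : e.sup (fun x => (x - v).val) ≤ n - r := by
      apply Finset.sup_le
      intro x hx
      rcases hemem x hx with rfl | rfl | hx2
      · simp
      · omega
      · omega
    have := hbmin2 e heH
    omega
  -- an edge through v with all positions ≤ T
  have heE : ∃ eE : Finset (Fin n), eE ∈ H ∧ v ∈ eE ∧ ∀ x ∈ eE, (x - v).val ≤ (t - v).val := by
    obtain ⟨e, hecard, hve, hte, hemem⟩ := mkset t 1 ((t - v).val - 1) htv (by omega) (by omega)
      (by omega) (by omega)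
    refine ⟨e, core_t e hecard hve hte, hve, ?_⟩
    intro x hx
    rcases hemem x hx with rfl | rfl | hx2
    · simp
    · omega
    · omega
  obtain ⟨eE, heEH, hveE, heEsub⟩ := heE
  -- the q function : minimum position over h \ {v}
  set qf : Finset (Fin n) → ℕ :=
    fun h => n - (h.erase v).sup (fun x => n - (x - v).val) with hqfdef
  have herase_ne : ∀ h ∈ H, (h.erase v).Nonempty := by
    intro h hh
    rw [← Finset.card_pos]
    by_cases hv : v ∈ h
    · rw [Finset.card_erase_of_mem hv, hcards h hh]; omega
    · rw [Finset.erase_eq_of_notMem hv, hcards h hh]; omega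
  have q_le : ∀ h, ∀ x ∈ h.erase v, qf h ≤ (x - v).val := by
    intro h x hx
    have h1 : n - (x - v).val ≤ (h.erase v).sup (fun x => n - (x - v).val) :=
      Finset.le_sup (f := fun x => n - (x - v).val) hx
    have := sub_val_lt x v
    simp only [hqfdef]
    omega
  have q_mem : ∀ h ∈ H, ∃ x ∈ h.erase v, (x - v).val = qf h := by
    intro h hh
    obtain ⟨x, hx, hsup⟩ := Finset.exists_mem_eq_sup _ (herase_ne h hh)
      (fun x => n - (x - v).val)
    refine ⟨x, hx, ?_⟩
    have h2 : x ≠ v := Finset.ne_of_mem_erase hx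
    have h3 : (x - v).val ≠ 0 := by rw [Ne, sub_eq_zero_iff']; exact h2
    have := sub_val_lt x v
    simp only [hqfdef, ← hsup]
    omega
  have q_pos : ∀ h ∈ H, 1 ≤ qf h := by
    intro h hh
    obtain ⟨x, hx, hxq⟩ := q_mem h hh
    have h2 : x ≠ v := Finset.ne_of_mem_erase hx
    have h3 : (x - v).val ≠ 0 := by rw [Ne, sub_eq_zero_iff']; exact h2
    omega
  have q_hi : ∀ h ∈ H, qf h ≤ n - r + 1 := by
    intro h hh
    have hband := band_pigeonhole (h' := h.erase v) (v := v) (lo := qf h) (hi := n - 1)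
      (fun x hx => ⟨q_le h x hx, by have := sub_val_lt x v; omega⟩)
    have hec : r - 1 ≤ (h.erase v).card := by
      by_cases hv : v ∈ h
      · rw [Finset.card_erase_of_mem hv, hcards h hh]
      · rw [Finset.erase_eq_of_notMem hv, hcards h hh]; omega
    omega
  -- maximal q edge
  obtain ⟨ha, haH, hamax⟩ := Finset.exists_max_image H qf hHne
  -- Q ≥ r
  have hQr : r ≤ qf ha := by
    by_contra hQ
    push_neg at hQ
    obtain ⟨u, huval⟩ : ∃ u : Fin n, (u - v).val = r := ⟨pt v r, pt_val v (by omega)⟩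
    have huv : u ≠ v := by
      intro hcon
      rw [hcon] at huval
      simp at huval
      omega
    have core_u : ∀ e : Finset (Fin n), e.card = r → v ∈ e → u ∈ e → e ∈ H := by
      apply klemma hr0 hH (fun hh => huv hh.symm)
        (kill_pigeon_low u huv (by omega))
      intro h' hh' hcon
      obtain ⟨x0, hx0, hx0q⟩ := q_mem h' hh'
      have hx0h : x0 ∈ h' := Finset.mem_of_mem_erase hx0
      have h2 := (arcOO_jv_val huv).mp (hcon x0 hx0h)
      have h3 := hamax h' hh'
      omega
    obtain ⟨e, hecard, hve, hue, hemem⟩ := mkset u (r+1) (n - 1) huv (by omega) (by omega)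
      (by omega) (by omega)
    have heH : e ∈ H := core_u e hecard hve hue
    obtain ⟨x0, hx0, hx0q⟩ := q_mem e heH
    have hx0e : x0 ∈ e := Finset.mem_of_mem_erase hx0
    have hx0v : x0 ≠ v := Finset.ne_of_mem_erase hx0
    have h4 := hamax e heH
    rcases hemem x0 hx0e with rfl | rfl | hx2
    · exact hx0v rfl
    · omega
    · omega
  -- an edge through v realizing at least Q
  have hq1 : ∃ h1 ∈ H, v ∈ h1 ∧ ∀ x ∈ h1, x = v ∨ qf ha ≤ (x - v).val := by
    by_cases hva : v ∈ ha
    · refine ⟨ha, haH, hva, ?_⟩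
      intro x hx
      by_cases hxv : x = v
      · exact Or.inl hxv
      · exact Or.inr (q_le ha x (Finset.mem_erase.mpr ⟨hxv, hx⟩))
    · obtain ⟨a, ha2, haq⟩ := q_mem ha haH
      have haa : a ∈ ha := Finset.mem_of_mem_erase ha2
      have hav : a ≠ v := Finset.ne_of_mem_erase ha2
      have hasub : ∀ x ∈ ha, x = v ∨ (a - v).val ≤ (x - v).val := by
        intro x hx
        by_cases hxv : x = v
        · exact Or.inl hxv
        · refine Or.inr ?_
          have := q_le ha x (Finset.mem_erase.mpr ⟨hxv, hx⟩)
          omega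
      have core_a : ∀ e : Finset (Fin n), e.card = r → v ∈ e → a ∈ e → e ∈ H := by
        apply klemma hr0 hH (fun hh => hav hh.symm)
          (kill_sep_low a ha hav haH hasub)
        intro h' hh' hcon
        obtain ⟨x0, hx0, hx0q⟩ := q_mem h' hh'
        have hx0h : x0 ∈ h' := Finset.mem_of_mem_erase hx0
        have h2 := (arcOO_jv_val hav).mp (hcon x0 hx0h)
        have h3 := hamax h' hh'
        omega
      obtain ⟨e, hecard, hve, hae, hemem⟩ := mkset a (qf ha + 1) (n - 1) hav (by omega)
        (by omega) (by have := q_hi ha haH; omega) (by omega)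
      have heH : e ∈ H := core_a e hecard hve hae
      refine ⟨e, heH, hve, ?_⟩
      intro x hx
      rcases hemem x hx with rfl | rfl | hx2
      · exact Or.inl rfl
      · exact Or.inr (by omega)
      · exact Or.inr (by omega)
  obtain ⟨h1, h1H, h1v, h1sub⟩ := hq1
  -- E ≤ Q
  have hEQ : (t - v).val ≤ qf ha := by
    by_contra hcon
    push_neg at hcon
    have hQhi := q_hi ha haH
    rcases Nat.lt_or_ge (qf ha) (n - r + 1) with hc | hc
    · -- Q ≤ n - r : build a set through v and t with q-value > Q
      have htband : (qf ha + 1 : ℕ) ≤ (t - v).val ∧ (t - v).val ≤ n - 1 := ⟨by omega, by omega⟩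
      have hbc : r - 2 ≤ ((Finset.univ.filter
          (fun x : Fin n => qf ha + 1 ≤ (x - v).val ∧ (x - v).val ≤ n - 1)).erase t).card := by
        have h5 : t ∈ (Finset.univ.filter
            (fun x : Fin n => qf ha + 1 ≤ (x - v).val ∧ (x - v).val ≤ n - 1)) := by
          rw [Finset.mem_filter]
          exact ⟨Finset.mem_univ _, htband⟩
        rw [Finset.card_erase_of_mem h5, card_band v (by omega)]
        omega
      obtain ⟨Y, hYsub, hYcard⟩ := Finset.exists_subset_card_eq hbc
      have hYmem : ∀ x ∈ Y, qf ha + 1 ≤ (x - v).val ∧ (x - v).val ≤ n - 1 := by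
        intro x hx
        have h6 := Finset.mem_of_mem_erase (hYsub hx)
        rw [Finset.mem_filter] at h6
        exact h6.2
      have hvY : v ∉ Y := by
        intro hcon2
        have h7 := hYmem v hcon2
        simp only [sub_self, Fin.val_zero] at h7
        omega
      have htY : t ∉ Y := fun hcon2 => Finset.notMem_erase t _ (hYsub hcon2)
      set e := insert v (insert t Y) with hedef
      have hecard : e.card = r := by
        rw [hedef, Finset.card_insert_of_notMem (by
          rw [Finset.mem_insert]
          push_neg
          exact ⟨fun hh => htv hh.symm, hvY⟩), Finset.card_insert_of_notMem htY, hYcard]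
        omega
      have heH : e ∈ H := core_t e hecard (by rw [hedef]; simp) (by rw [hedef]; simp)
      obtain ⟨x0, hx0, hx0q⟩ := q_mem e heH
      have hx0e : x0 ∈ e := Finset.mem_of_mem_erase hx0
      have hx0v : x0 ≠ v := Finset.ne_of_mem_erase hx0
      have h4 := hamax e heH
      rw [hedef] at hx0e
      rw [Finset.mem_insert, Finset.mem_insert] at hx0e
      rcases hx0e with rfl | rfl | hx2
      · exact hx0v rfl
      · omega
      · have := hYmem x0 hx2
        omega
    · omega
  -- arithmetic helpers on successors/predecessors
  have hone : (1 : Fin n).val = 1 := by rw [Fin.val_one', Nat.mod_eq_of_lt (by omega)]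
  have hsub1 : ∀ jj : Fin n, (jj - v).val ≠ 0 → ((jj - 1) - v).val = (jj - v).val - 1 := by
    intro jj hjj
    have heq : jj - 1 - v = (jj - v) - 1 := by
      rw [sub_right_comm]
    rw [heq, sub_val, hone]
    rw [if_pos (by omega)]
  have hadd1 : ∀ jj : Fin n, (jj - v).val < n - 1 → ((jj + 1) - v).val = (jj - v).val + 1 := by
    intro jj hjj
    have heq : jj + 1 - v = (jj - v) + 1 := by
      rw [add_sub_right_comm]
    rw [heq, Fin.add_def, hone]
    exact Nat.mod_eq_of_lt (by omega)
  have hwrap : ∀ jj : Fin n, (jj - v).val = n - 1 → jj + 1 = v := by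
    intro jj hjj
    have heq : jj + 1 - v = (jj - v) + 1 := by
      rw [add_sub_right_comm]
    apply sub_eq_zero_iff'.mp
    rw [heq, Fin.add_def, hone]
    have h4 : (jj - v).val + 1 = n := by omega
    simp [h4]
  -- characterization of IsRho
  have hrho : ∀ j, IsRho H v j ↔ (j - v).val = (t - v).val := by
    have c1 : ∀ jj : Fin n, (∃ h ∈ H, v ∈ h ∧ h ⊆ arcCC v jj) ↔
        (t - v).val ≤ (jj - v).val := by
      intro jj
      constructor
      · rintro ⟨h, hh, hvh, hsub⟩
        have h2 := hbmin2 h hh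
        have h3 : h.sup (fun x => (x - v).val) ≤ (jj - v).val :=
          Finset.sup_le (fun x hx => arcCC_vj_val.mp (hsub hx))
        omega
      · intro hle
        exact ⟨eE, heEH, hveE, fun x hx => arcCC_vj_val.mpr (le_trans (heEsub x hx) hle)⟩
    intro j
    unfold IsRho
    constructor
    · rintro ⟨hA, hB⟩
      have h1 := (c1 j).mp hA
      have hjv : (j - v).val ≠ 0 := by omega
      have hj1 := hsub1 j hjv
      by_contra hne
      exact hB ((c1 (j - 1)).mpr (by omega))
    · intro he
      refine ⟨(c1 j).mpr (by omega), ?_⟩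
      intro hcon
      have h2 := (c1 (j - 1)).mp hcon
      have hjv : (j - v).val ≠ 0 := by omega
      have hj1 := hsub1 j hjv
      omega
  -- characterization of IsLam
  have hlam : ∀ j, IsLam H v j ↔ (j - v).val = qf ha := by
    have cvv : ¬ (∃ h ∈ H, v ∈ h ∧ h ⊆ arcCC v v) := by
      rintro ⟨h, hh, hvh, hsub⟩
      have hc2 : 1 < h.card := by rw [hcards h hh]; omega
      obtain ⟨x, hx, hxv⟩ := Finset.exists_mem_ne hc2 v
      have h3 := arcCC_vj_val.mp (hsub hx)
      simp only [sub_self, Fin.val_zero] at h3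
      exact hxv (sub_eq_zero_iff'.mp (by omega))
    have c2 : ∀ jj : Fin n, jj ≠ v →
        ((∃ h ∈ H, v ∈ h ∧ h ⊆ arcCC jj v) ↔ (jj - v).val ≤ qf ha) := by
      intro jj hjv
      constructor
      · rintro ⟨h, hh, hvh, hsub⟩
        obtain ⟨x0, hx0, hx0q⟩ := q_mem h hh
        have hx0h : x0 ∈ h := Finset.mem_of_mem_erase hx0
        have hx0v : x0 ≠ v := Finset.ne_of_mem_erase hx0
        have h2 := (arcCC_jv_val hjv).mp (hsub hx0h)
        have h3 := hamax h hh
        rcases h2 with h2 | h2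
        · exact absurd h2 hx0v
        · omega
      · intro hle
        refine ⟨h1, h1H, h1v, fun x hx => (arcCC_jv_val hjv).mpr ?_⟩
        rcases h1sub x hx with h | h
        · exact Or.inl h
        · exact Or.inr (by omega)
    intro j
    have hQhi := q_hi ha haH
    unfold IsLam
    by_cases hjv : j = v
    · subst hjv
      simp only [sub_self, Fin.val_zero]
      constructor
      · rintro ⟨hA, _⟩
        exact absurd hA cvv
      · intro hcon
        omega
    · constructor
      · rintro ⟨hA, hB⟩
        have h1le := (c2 j hjv).mp hA
        by_contra hne
        have hjn : (j - v).val < n - 1 := by omega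
        have hp1 := hadd1 j hjn
        have hj1v : j + 1 ≠ v := by
          intro hcon
          rw [hcon] at hp1
          simp only [sub_self, Fin.val_zero] at hp1
          omega
        exact hB ((c2 (j + 1) hj1v).mpr (by omega))
      · intro he
        refine ⟨(c2 j hjv).mpr (by omega), ?_⟩
        intro hcon
        by_cases hj1v : j + 1 = v
        · rw [hj1v] at hcon
          exact cvv hcon
        · have h2 := (c2 (j + 1) hj1v).mp hcon
          have hjn : (j - v).val < n - 1 := by
            have h4 := sub_val_lt j v
            rcases Nat.lt_or_ge ((j - v).val) (n - 1) with h5 | h5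
            · exact h5
            · exact absurd (hwrap j (by omega)) hj1v
          have hp1 := hadd1 j hjn
          omega
  -- the interval property
  have hcore : ∀ j : Fin n, (t - v).val ≤ (j - v).val → (j - v).val ≤ qf ha →
      ∀ e : Finset (Fin n), e.card = r → v ∈ e → j ∈ e → e ∈ H := by
    intro j hjl hjr
    have hjv : j ≠ v := by
      intro hcon
      rw [hcon] at hjl
      simp only [sub_self, Fin.val_zero] at hjl
      omega
    apply klemma hr0 hH (fun hh => hjv hh.symm)
    · apply kill_sep_low j h1 hjv h1H
      intro x hx
      rcases h1sub x hx with h | h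
      · exact Or.inl h
      · exact Or.inr (by omega)
    · exact kill_sep_high j eE hjv heEH (fun x hx => le_trans (heEsub x hx) hjl)
  exact ⟨(t - v).val, qf ha, hTr, hTnr, hQr, q_hi ha haH, hEQ, hdeg, hrho, hlam, hcore⟩


end LRB

-- STATEMENT 14
open LRB in
open Fin.NatCast in
theorem lam_rho_basic (n r : ℕ) [NeZero n] (hr : 2 ≤ r) (hn : 2 * r ≤ n)
    (H : Finset (Finset (Fin n))) (hH : IsSat (M1r r) r H) :
    (∀ v : Fin n, (∃ h ∈ H, v ∈ h) ∧ (∃! j, IsLam H v j) ∧ (∃! j, IsRho H v j)) ∧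
    (∀ v j : Fin n, IsLam H v j →
      j ∉ arcCC (v - ((r - 2 : ℕ) : Fin n)) (v + ((r - 1 : ℕ) : Fin n))) ∧
    (∀ v j : Fin n, IsRho H v j →
      j ∉ arcCC (v - ((r - 1 : ℕ) : Fin n)) (v + ((r - 2 : ℕ) : Fin n))) ∧
    (∀ v l rh : Fin n, IsLam H v l → IsRho H v rh → v ∈ arcOO l rh) ∧
    (∀ v l rh : Fin n, IsLam H v l → IsRho H v rh →
      ∀ j ∈ arcCC rh l, ∀ e : Finset (Fin n), e.card = r → v ∈ e → j ∈ e → e ∈ H) := by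
  have hn4 : 4 ≤ n := by omega
  refine ⟨?_, ?_, ?_, ?_, ?_⟩
  · intro v
    obtain ⟨E, Q, hE1, hE2, hQ1, hQ2, hEQ, hdeg, hrho, hlam, hcore⟩ := master hr hn hH v
    refine ⟨hdeg, ?_, ?_⟩
    · refine ⟨pt v Q, (hlam _).mpr (pt_val v (by omega)), ?_⟩
      intro y hy
      exact sub_inj (((hlam y).mp hy).trans (pt_val v (by omega)).symm)
    · refine ⟨pt v E, (hrho _).mpr (pt_val v (by omega)), ?_⟩
      intro y hy
      exact sub_inj (((hrho y).mp hy).trans (pt_val v (by omega)).symm)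
  · intro v j hl
    obtain ⟨E, Q, hE1, hE2, hQ1, hQ2, hEQ, hdeg, hrho, hlam, hcore⟩ := master hr hn hH v
    have hj := (hlam j).mp hl
    intro hmem
    rw [mem_arcCC_iff] at hmem
    have hc1 : (((r - 2 : ℕ) : Fin n)).val = r - 2 := by
      rw [Fin.val_natCast]; exact Nat.mod_eq_of_lt (by omega)
    have hc2 : (((r - 1 : ℕ) : Fin n)).val = r - 1 := by
      rw [Fin.val_natCast]; exact Nat.mod_eq_of_lt (by omega)
    have heq1 : j - (v - ((r - 2 : ℕ) : Fin n)) = (j - v) + ((r - 2 : ℕ) : Fin n) := by abel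
    have heq2 : (v + ((r - 1 : ℕ) : Fin n)) - (v - ((r - 2 : ℕ) : Fin n))
        = ((r - 1 : ℕ) : Fin n) + ((r - 2 : ℕ) : Fin n) := by abel
    rw [heq1, heq2, Fin.add_def, Fin.add_def, hc1, hc2, hj] at hmem
    simp only [Fin.val_mk] at hmem
    rw [modsmall (by omega) (by omega), modsmall (by omega) (by omega)] at hmem
    split_ifs at hmem <;> omega
  · intro v j hl
    obtain ⟨E, Q, hE1, hE2, hQ1, hQ2, hEQ, hdeg, hrho, hlam, hcore⟩ := master hr hn hH v
    have hj := (hrho j).mp hl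
    intro hmem
    rw [mem_arcCC_iff] at hmem
    have hc1 : (((r - 2 : ℕ) : Fin n)).val = r - 2 := by
      rw [Fin.val_natCast]; exact Nat.mod_eq_of_lt (by omega)
    have hc2 : (((r - 1 : ℕ) : Fin n)).val = r - 1 := by
      rw [Fin.val_natCast]; exact Nat.mod_eq_of_lt (by omega)
    have heq1 : j - (v - ((r - 1 : ℕ) : Fin n)) = (j - v) + ((r - 1 : ℕ) : Fin n) := by abel
    have heq2 : (v + ((r - 2 : ℕ) : Fin n)) - (v - ((r - 1 : ℕ) : Fin n))
        = ((r - 2 : ℕ) : Fin n) + ((r - 1 : ℕ) : Fin n) := by abel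
    rw [heq1, heq2, Fin.add_def, Fin.add_def, hc1, hc2, hj] at hmem
    simp only [Fin.val_mk] at hmem
    rw [modsmall (by omega) (by omega), modsmall (by omega) (by omega)] at hmem
    split_ifs at hmem <;> omega
  · intro v l rh hl hrh
    obtain ⟨E, Q, hE1, hE2, hQ1, hQ2, hEQ, hdeg, hrho, hlam, hcore⟩ := master hr hn hH v
    have hlv := (hlam l).mp hl
    have hrv := (hrho rh).mp hrh
    have hlvne : l ≠ v := by
      intro hcon
      rw [hcon] at hlv
      simp only [sub_self, Fin.val_zero] at hlv
      omega
    have hcomm := sub_val_comm (a := v) (b := l) (fun hh => hlvne hh.symm)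
    rw [mem_arcOO_iff, sub_rebase v l rh]
    rw [hlv] at hcomm ⊢
    rw [hrv]
    split_ifs <;> omega
  · intro v l rh hl hrh j hjmem e ce hve hje
    obtain ⟨E, Q, hE1, hE2, hQ1, hQ2, hEQ, hdeg, hrho, hlam, hcore⟩ := master hr hn hH v
    have hlv := (hlam l).mp hl
    have hrv := (hrho rh).mp hrh
    rw [mem_arcCC_iff, sub_rebase v rh j, sub_rebase v rh l, hlv, hrv] at hjmem
    have hjlt := sub_val_lt j v
    have hb1 : E ≤ (j - v).val ∧ (j - v).val ≤ Q := by
      split_ifs at hjmem <;> omega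
    exact hcore j hb1.1 hb1.2 e ce hve hje
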